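/- For every v ∈ [0,1)^𝑁 and every u ∈ [0,1], there exists exactly one differentiable function y : [0,∞) → ℝ with 0 ≤ y(t) ≤ 1 for all t ≥ 0, y(0) = u, and y'(t) = B_𝑁(y(t), v) + B̄_𝑁(y(t)) for all t ≥ 0. -/

import Mathlib

open Set Real Filter Metric Topology

set_option linter.unusedSectionVars false

namespace Stmt6

noncomputable def F (c : ℕ → ℝ) (x : ℝ) : ℝ := ∑' j, c j * x ^ j

variable {c : ℕ → ℝ}

lemma term_bound {x : ℝ} (hx : |x| ≤ 1) (j : ℕ) : ‖c j * x ^ j‖ ≤ |c j| := by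
  rw [Real.norm_eq_abs, abs_mul, abs_pow]
  calc |c j| * |x| ^ j ≤ |c j| * 1 := by
        exact mul_le_mul_of_nonneg_left (pow_le_one₀ (abs_nonneg x) hx) (abs_nonneg _)
    _ = |c j| := mul_one _

lemma summable_term (hc : Summable fun j => |c j|) {x : ℝ} (hx : |x| ≤ 1) :
    Summable fun j => c j * x ^ j :=
  Summable.of_norm_bounded hc (term_bound hx)

lemma abs_F_le (hc : Summable fun j => |c j|) {x : ℝ} (hx : |x| ≤ 1) :
    |F c x| ≤ ∑' j, |c j| := by
  have := norm_tsum_le_tsum_norm (f := fun j => c j * x ^ j)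
    (hc.of_nonneg_of_le (fun j => norm_nonneg _) (term_bound hx))
  refine le_trans this (Summable.tsum_le_tsum (term_bound hx) ?_ hc)
  exact hc.of_nonneg_of_le (fun j => norm_nonneg _) (term_bound hx)

lemma continuousOn_F (hc : Summable fun j => |c j|) :
    ContinuousOn (F c) (Icc (-1 : ℝ) 1) := by
  refine continuousOn_tsum (fun i => ?_) hc (fun n x hx => ?_)
  · exact (continuous_const.mul (continuous_pow _)).continuousOn
  · exact term_bound (abs_le.2 ⟨hx.1, hx.2⟩) n

lemma pow_sub_pow_bound {r : ℝ} (hr0 : 0 ≤ r) {x y : ℝ} (hx : |x| ≤ r) (hy : |y| ≤ r) :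
    ∀ k : ℕ, |x ^ (k + 1) - y ^ (k + 1)| ≤ ((k : ℝ) + 1) * r ^ k * |x - y| := by
  intro k
  induction k with
  | zero => simp
  | succ n ih =>
    have hxy : x ^ (n + 2) - y ^ (n + 2) = x * (x ^ (n + 1) - y ^ (n + 1)) + (x - y) * y ^ (n + 1) := by
      ring
    have h1 : |x ^ (n + 2) - y ^ (n + 2)| ≤ |x| * |x ^ (n + 1) - y ^ (n + 1)| + |x - y| * |y| ^ (n + 1) := by
      rw [hxy]
      refine le_trans (abs_add_le _ _) ?_
      rw [abs_mul, abs_mul, abs_pow]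
    have h2 : |x| * |x ^ (n + 1) - y ^ (n + 1)| ≤ r * (((n : ℝ) + 1) * r ^ n * |x - y|) :=
      mul_le_mul hx ih (abs_nonneg _) hr0
    have h3 : |x - y| * |y| ^ (n + 1) ≤ |x - y| * r ^ (n + 1) :=
      mul_le_mul_of_nonneg_left (pow_le_pow_left₀ (abs_nonneg _) hy _) (abs_nonneg _)
    calc |x ^ (n + 2) - y ^ (n + 2)| ≤ r * (((n : ℝ) + 1) * r ^ n * |x - y|) + |x - y| * r ^ (n + 1) := by
          exact le_trans h1 (add_le_add h2 h3)
      _ = ((n : ℝ) + 1 + 1) * r ^ (n + 1) * |x - y| := by ring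
      _ = ((n + 1 : ℕ) + 1 : ℝ) * r ^ (n + 1) * |x - y| := by push_cast; ring

lemma succ_mul_pow_le {r : ℝ} (h0 : 0 ≤ r) (h1 : r < 1) (k : ℕ) :
    ((k : ℝ) + 1) * r ^ k ≤ (1 - r)⁻¹ := by
  have heq : ((k : ℝ) + 1) * r ^ k = ∑ _i ∈ Finset.range (k + 1), r ^ k := by
    rw [Finset.sum_const, Finset.card_range, nsmul_eq_mul]
    push_cast; ring
  rw [heq]
  have hle : ∑ i ∈ Finset.range (k + 1), r ^ k ≤ ∑ i ∈ Finset.range (k + 1), r ^ i := by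
    refine Finset.sum_le_sum fun i hi => ?_
    exact pow_le_pow_of_le_one h0 h1.le (Nat.lt_succ_iff.mp (Finset.mem_range.mp hi))
  refine le_trans hle ?_
  have := Summable.sum_le_tsum (Finset.range (k + 1)) (fun i _ => pow_nonneg h0 i)
    (summable_geometric_of_lt_one h0 h1)
  rwa [tsum_geometric_of_lt_one h0 h1] at this


lemma lipschitzOnWith_F (hc : Summable fun j => |c j|) {r : ℝ} (h0 : 0 ≤ r) (h1 : r < 1) :
    ∃ K : NNReal, LipschitzOnWith K (F c) (Icc (-r) r) := by
  set M := ∑' j, |c j| with hM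
  have hM0 : 0 ≤ M := tsum_nonneg fun j => abs_nonneg _
  have hB0 : (0 : ℝ) ≤ (1 - r)⁻¹ := inv_nonneg.2 (by linarith)
  refine ⟨Real.toNNReal (M * (1 - r)⁻¹), LipschitzOnWith.of_dist_le_mul fun x hx y hy => ?_⟩
  have hxr : |x| ≤ r := abs_le.2 ⟨hx.1, hx.2⟩
  have hyr : |y| ≤ r := abs_le.2 ⟨hy.1, hy.2⟩
  have hx1 : |x| ≤ 1 := hxr.trans h1.le
  have hy1 : |y| ≤ 1 := hyr.trans h1.le
  have hsx := summable_term hc hx1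
  have hsy := summable_term hc hy1
  have hterm : ∀ j : ℕ, |c j * x ^ j - c j * y ^ j| ≤ |c j| * ((1 - r)⁻¹ * |x - y|) := by
    intro j
    rw [← mul_sub, abs_mul]
    cases j with
    | zero => simp [mul_nonneg, mul_nonneg hB0 (abs_nonneg (x - y)), mul_nonneg (abs_nonneg (c 0)) (mul_nonneg hB0 (abs_nonneg (x - y)))]
    | succ k =>
      refine mul_le_mul_of_nonneg_left ?_ (abs_nonneg _)
      calc |x ^ (k + 1) - y ^ (k + 1)| ≤ ((k : ℝ) + 1) * r ^ k * |x - y| :=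
            pow_sub_pow_bound h0 hxr hyr k
        _ ≤ (1 - r)⁻¹ * |x - y| :=
            mul_le_mul_of_nonneg_right (succ_mul_pow_le h0 h1 k) (abs_nonneg _)
  have hsum2 : Summable fun j => |c j| * ((1 - r)⁻¹ * |x - y|) := hc.mul_right _
  have hsum1 : Summable fun j => |c j * x ^ j - c j * y ^ j| :=
    hsum2.of_nonneg_of_le (fun j => abs_nonneg _) hterm
  rw [Real.dist_eq, Real.dist_eq, Real.coe_toNNReal _ (mul_nonneg hM0 hB0)]
  have hFsub : F c x - F c y = ∑' j, (c j * x ^ j - c j * y ^ j) := (Summable.tsum_sub hsx hsy).symm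
  calc |F c x - F c y| = |∑' j, (c j * x ^ j - c j * y ^ j)| := by rw [hFsub]
    _ ≤ ∑' j, |c j * x ^ j - c j * y ^ j| := by
        simpa using norm_tsum_le_tsum_norm (f := fun j => c j * x ^ j - c j * y ^ j)
          (by simpa using hsum1)
    _ ≤ ∑' j, |c j| * ((1 - r)⁻¹ * |x - y|) := Summable.tsum_le_tsum hterm hsum1 hsum2
    _ = M * ((1 - r)⁻¹ * |x - y|) := tsum_mul_right
    _ = M * (1 - r)⁻¹ * |x - y| := by ring


lemma upper_barrier {G : ℝ → ℝ} {α : ℝ → ℝ} {T bb : ℝ}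
    (hG : ∀ x, bb ≤ x → G x ≤ 0)
    (hcont : ContinuousOn α (Icc 0 T))
    (hderiv : ∀ t ∈ Ioo 0 T, HasDerivAt α (G (α t)) t)
    (h0 : α 0 ≤ bb) : ∀ t ∈ Icc 0 T, α t ≤ bb := by
  by_contra hcon
  push_neg at hcon
  obtain ⟨t', ht', hgt⟩ := hcon
  have ht'0 : 0 < t' := by
    rcases eq_or_lt_of_le ht'.1 with h | h
    · exact absurd (h ▸ h0) (not_le.2 (h ▸ hgt))
    · exact h
  set S : Set ℝ := Icc 0 t' ∩ α ⁻¹' (Iic bb) with hS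
  have hSclosed : IsClosed S :=
    (hcont.mono (Icc_subset_Icc_right ht'.2)).preimage_isClosed_of_isClosed isClosed_Icc
      isClosed_Iic
  have hSne : S.Nonempty := ⟨0, ⟨le_rfl, ht'0.le⟩, h0⟩
  have hSbdd : BddAbove S := BddAbove.mono (inter_subset_left) bddAbove_Icc
  set s := sSup S with hs
  have hsmem : s ∈ S := hSclosed.csSup_mem hSne hSbdd
  have hs0 : 0 ≤ s := hsmem.1.1
  have hslt : s < t' := lt_of_le_of_ne hsmem.1.2 fun h => (not_le.2 hgt) (h ▸ hsmem.2)
  have hgt' : ∀ x ∈ Ioc s t', bb < α x := by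
    intro x hx
    by_contra hle
    push_neg at hle
    have hxS : x ∈ S := ⟨⟨le_trans hs0 hx.1.le, hx.2⟩, hle⟩
    exact absurd (le_csSup hSbdd hxS) (not_le.2 hx.1)
  have hanti : AntitoneOn α (Icc s t') := by
    apply antitoneOn_of_deriv_nonpos (convex_Icc s t')
      (hcont.mono (Icc_subset_Icc hs0 ht'.2))
    · intro x hx
      rw [interior_Icc] at hx
      exact ((hderiv x ⟨lt_of_le_of_lt hs0 hx.1, lt_of_lt_of_le hx.2 ht'.2⟩
        ).differentiableAt).differentiableWithinAt
    · intro x hx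
      rw [interior_Icc] at hx
      rw [(hderiv x ⟨lt_of_le_of_lt hs0 hx.1, lt_of_lt_of_le hx.2 ht'.2⟩).deriv]
      exact hG _ (hgt' x ⟨hx.1, hx.2.le⟩).le
  have := hanti ⟨le_rfl, hslt.le⟩ ⟨hslt.le, le_rfl⟩ hslt.le
  exact absurd (this.trans hsmem.2) (not_le.2 hgt)

lemma clamp_lip (a b : ℝ) : LipschitzWith 1 (fun x => max a (min x b)) := by
  refine LipschitzWith.of_dist_le_mul fun x y => ?_
  rw [NNReal.coe_one, one_mul, Real.dist_eq, Real.dist_eq]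
  calc |max a (min x b) - max a (min y b)| = |max (min x b) a - max (min y b) a| := by
        rw [max_comm a, max_comm a]
    _ ≤ |min x b - min y b| := abs_max_sub_max_le_abs _ _ _
    _ = |max (-x) (-b) - max (-y) (-b)| := by
        rw [max_neg_neg, max_neg_neg, neg_sub_neg, abs_sub_comm]
    _ ≤ |(-x) - (-y)| := abs_max_sub_max_le_abs _ _ _
    _ = |x - y| := by rw [neg_sub_neg, abs_sub_comm]

lemma hasDerivWithinAt_Ici_of_Icc {f : ℝ → ℝ} {d T t : ℝ} (hT : t < T) (ht : 0 ≤ t)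
    (h : HasDerivWithinAt f d (Icc 0 T) t) : HasDerivWithinAt f d (Ici t) t := by
  have h1 : HasDerivWithinAt f d (Ici t ∩ Iio T) t :=
    h.mono fun x hx => ⟨le_trans ht hx.1, hx.2.le⟩
  exact (hasDerivWithinAt_inter (Iio_mem_nhds hT)).1 h1

lemma exists_solution (hc : Summable fun j => |c j|) {a b u : ℝ}
    (ha0 : 0 ≤ a) (hab : a ≤ b) (hb1 : b < 1)
    (hFa : 0 ≤ F c a) (hFb : F c b ≤ 0) (hu : u ∈ Icc a b) :
    ∃ y : ℝ → ℝ, y 0 = u ∧ ∀ t, 0 ≤ t →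
      y t ∈ Icc a b ∧ HasDerivWithinAt y (F c (y t)) (Ici 0) t := by
  classical
  set M := ∑' j, |c j| with hM
  have hM0 : 0 ≤ M := tsum_nonneg fun j => abs_nonneg _
  have hb0 : 0 ≤ b := le_trans ha0 hab
  set cl : ℝ → ℝ := fun x => max a (min x b) with hcl
  have hclmem : ∀ x, cl x ∈ Icc a b := fun x => ⟨le_max_left _ _, max_le hab (min_le_right _ _)⟩
  have hcl_eq : ∀ x ∈ Icc a b, cl x = x := fun x hx => by
    show max a (min x b) = x
    rw [min_eq_left hx.2, max_eq_right hx.1]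
  have hcl_abs : ∀ x, |cl x| ≤ b := fun x =>
    abs_le.2 ⟨le_trans (neg_nonpos.2 hb0) (le_trans ha0 (hclmem x).1), (hclmem x).2⟩
  obtain ⟨K, hK⟩ := lipschitzOnWith_F hc hb0 hb1
  set G : ℝ → ℝ := fun x => F c (cl x) with hG
  have hGlip : LipschitzWith K G := by
    refine LipschitzWith.of_dist_le_mul fun x y => ?_
    have h1 : cl x ∈ Icc (-b) b := abs_le.1 (hcl_abs x)
    have h2 : cl y ∈ Icc (-b) b := abs_le.1 (hcl_abs y)
    calc dist (G x) (G y) ≤ K * dist (cl x) (cl y) := hK.dist_le_mul _ h1 _ h2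
      _ ≤ K * dist x y := by
          have := (clamp_lip a b).dist_le_mul x y
          rw [NNReal.coe_one, one_mul] at this
          exact mul_le_mul_of_nonneg_left this K.coe_nonneg
  have hGbound : ∀ x, ‖G x‖ ≤ M := fun x =>
    abs_F_le hc (le_trans (hcl_abs x) hb1.le)
  have hGa : ∀ x, x ≤ a → 0 ≤ G x := by
    intro x hx
    have h : cl x = a := by
      show max a (min x b) = a
      rw [max_eq_left (le_trans (min_le_left _ _) hx)]
    show 0 ≤ F c (cl x)
    rw [h]; exact hFa
  have hGb : ∀ x, b ≤ x → G x ≤ 0 := by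
    intro x hx
    have h : cl x = b := by
      show max a (min x b) = b
      rw [min_eq_right hx, max_eq_right hab]
    show F c (cl x) ≤ 0
    rw [h]; exact hFb
  have hpl : ∀ n : ℕ, IsPicardLindelof (fun _ x => G x) (tmin := 0) (tmax := n)
      ⟨0, le_rfl, n.cast_nonneg⟩ u (Real.toNNReal (M * n)) 0 (Real.toNNReal M) K := by
    intro n
    refine ⟨fun _ _ => LipschitzWith.lipschitzOnWith hGlip, fun x _ => continuousOn_const,
      fun t _ x _ => le_trans (hGbound x) (Real.le_coe_toNNReal M), ?_⟩
    show (M.toNNReal : ℝ) * max ((n:ℝ) - 0) (0 - 0) ≤ ((M * n).toNNReal : ℝ) - ((0:NNReal):ℝ)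
    rw [Real.coe_toNNReal _ hM0, Real.coe_toNNReal _ (mul_nonneg hM0 n.cast_nonneg)]
    simp only [sub_zero, NNReal.coe_zero]
    rw [max_eq_left n.cast_nonneg]
  have hA : ∀ n : ℕ, ∃ α : ℝ → ℝ, α 0 = u ∧
      ∀ t ∈ Icc (0:ℝ) n, HasDerivWithinAt α (G (α t)) (Icc (0:ℝ) n) t :=
    fun n => (hpl n).exists_eq_forall_mem_Icc_hasDerivWithinAt₀
  choose A hA0 hAder using hA
  have hAcont : ∀ n : ℕ, ContinuousOn (A n) (Icc (0:ℝ) n) := fun n t ht =>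
    (hAder n t ht).continuousWithinAt
  have hAici : ∀ n : ℕ, ∀ t ∈ Ico (0:ℝ) n, HasDerivWithinAt (A n) (G (A n t)) (Ici t) t :=
    fun n t ht => hasDerivWithinAt_Ici_of_Icc ht.2 ht.1 (hAder n t ⟨ht.1, ht.2.le⟩)
  have huniq : ∀ n m : ℕ, EqOn (A n) (A m) (Icc (0:ℝ) (min (n:ℝ) m)) := by
    intro n m
    refine ODE_solution_unique (v := fun _ x => G x) (fun _ => hGlip)
      ((hAcont n).mono (Icc_subset_Icc_right (min_le_left _ _)))
      (fun t ht => (hAici n t ⟨ht.1, lt_of_lt_of_le ht.2 (min_le_left _ _)⟩))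
      ((hAcont m).mono (Icc_subset_Icc_right (min_le_right _ _)))
      (fun t ht => (hAici m t ⟨ht.1, lt_of_lt_of_le ht.2 (min_le_right _ _)⟩))
      (by rw [hA0 n, hA0 m])
  have hAmem : ∀ n : ℕ, ∀ t ∈ Icc (0:ℝ) n, A n t ∈ Icc a b := by
    intro n
    have hup : ∀ t ∈ Icc (0:ℝ) n, A n t ≤ b := by
      refine upper_barrier hGb (hAcont n) (fun t ht => ?_) (by rw [hA0 n]; exact hu.2)
      exact (hAder n t (Ioo_subset_Icc_self ht)).hasDerivAt (Icc_mem_nhds ht.1 ht.2)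
    have hlo : ∀ t ∈ Icc (0:ℝ) n, a ≤ A n t := by
      have := upper_barrier (G := fun x => -G (-x)) (α := fun t => -A n t) (T := n) (bb := -a)
        (fun x hx => by
          have : -x ≤ a := by linarith
          simpa using hGa (-x) this)
        (by exact (hAcont n).neg)
        (fun t ht => by
          have h := ((hAder n t (Ioo_subset_Icc_self ht)).hasDerivAt
            (Icc_mem_nhds ht.1 ht.2)).neg
          have h2 : HasDerivAt (fun t => -A n t) (-G (A n t)) t := h
          simpa using h2)
        (by show -A n 0 ≤ -a; rw [hA0 n]; linarith [hu.1])
      intro t ht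
      have h2 : -A n t ≤ -a := this t ht
      linarith
    exact fun t ht => ⟨hlo t ht, hup t ht⟩
  refine ⟨fun t => A (⌈t⌉₊ + 1) t, hA0 _, ?_⟩
  intro t ht
  set n := ⌈t⌉₊ + 1 with hn
  have htn : t < (n : ℝ) := lt_of_le_of_lt (Nat.le_ceil t) (by rw [hn]; push_cast; linarith)
  have htn' : t ∈ Icc (0:ℝ) n := ⟨ht, htn.le⟩
  have heq : ∀ s ∈ Icc (0:ℝ) n, A (⌈s⌉₊ + 1) s = A n s := by
    intro s hs
    refine huniq _ n ⟨hs.1, le_min ?_ hs.2⟩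
    exact le_of_lt (lt_of_le_of_lt (Nat.le_ceil s) (by push_cast; linarith))
  constructor
  · show A (⌈t⌉₊ + 1) t ∈ Icc a b
    rw [heq t htn']
    exact hAmem n t htn'
  · have hd : HasDerivWithinAt (A n) (G (A n t)) (Ici 0 ∩ Iio (n:ℝ)) t :=
      (hAder n t htn').mono fun x hx => ⟨hx.1, hx.2.le⟩
    have hcongr : HasDerivWithinAt (fun s => A (⌈s⌉₊ + 1) s) (G (A n t)) (Ici 0 ∩ Iio (n:ℝ)) t :=
      hd.congr (fun s hs => heq s ⟨hs.1, hs.2.le⟩) (heq t htn')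
    have hfin := (hasDerivWithinAt_inter (Iio_mem_nhds htn)).1 hcongr
    show HasDerivWithinAt (fun s => A (⌈s⌉₊ + 1) s) (F c (A (⌈t⌉₊ + 1) t)) (Ici 0) t
    rw [heq t htn', ← hcl_eq _ (hAmem n t htn')]
    exact hfin


noncomputable def clS (ρ x : ℝ) : ℝ := max (1 - ρ) (min x 1)

noncomputable def hS (c : ℕ → ℝ) (ρ s : ℝ) : ℝ := (-(F c (clS ρ s)))⁻¹

noncomputable def TS (c : ℕ → ℝ) (ρ x : ℝ) : ℝ := ∫ s in x..(1:ℝ), hS c ρ s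

variable {ρ : ℝ}

lemma clS_mem (hρ0 : 0 < ρ) (x : ℝ) : clS ρ x ∈ Icc (1 - ρ) 1 :=
  ⟨le_max_left _ _, max_le (by linarith) (min_le_right _ _)⟩

lemma clS_eq {x : ℝ} (hx : x ∈ Icc (1 - ρ) 1) : clS ρ x = x := by
  unfold clS
  rw [min_eq_left hx.2, max_eq_right hx.1]

lemma TS_one : TS c ρ 1 = 0 := intervalIntegral.integral_same

section StripFacts

variable (hc : Summable fun j => |c j|) (hρ0 : 0 < ρ) (hρ1 : ρ ≤ 1)
  (hneg : ∀ x ∈ Icc (1 - ρ) 1, F c x < 0)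

include hc hρ0 hρ1 hneg

lemma F_clS_neg (x : ℝ) : F c (clS ρ x) < 0 := hneg _ (clS_mem hρ0 x)

lemma hS_pos (x : ℝ) : 0 < hS c ρ x :=
  inv_pos.2 (neg_pos.2 (F_clS_neg hc hρ0 hρ1 hneg x))

lemma clS_abs_le (x : ℝ) : |clS ρ x| ≤ 1 := by
  have h := clS_mem hρ0 x
  exact abs_le.2 ⟨by linarith [h.1], h.2⟩

lemma hS_cont : Continuous (hS c ρ) := by
  have h1 : Continuous (clS ρ) := continuous_const.max (continuous_id.min continuous_const)
  have h2 : Continuous fun x => F c (clS ρ x) := by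
    refine (continuousOn_F hc).comp_continuous h1 fun x => ?_
    have h := clS_mem hρ0 x
    exact ⟨by linarith [h.1], h.2⟩
  exact (h2.neg).inv₀ fun x => ne_of_gt (neg_pos.2 (F_clS_neg hc hρ0 hρ1 hneg x))

lemma M_pos : 0 < ∑' j, |c j| := by
  have h1 : F c 1 < 0 := hneg 1 ⟨by linarith, le_rfl⟩
  have h2 : |F c 1| ≤ ∑' j, |c j| := abs_F_le hc (by norm_num)
  have h3 : 0 < |F c 1| := abs_pos.2 (ne_of_lt h1)
  linarith

lemma hS_ge (x : ℝ) : (∑' j, |c j|)⁻¹ ≤ hS c ρ x := by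
  have hpos : 0 < -(F c (clS ρ x)) := neg_pos.2 (F_clS_neg hc hρ0 hρ1 hneg x)
  have hle : -(F c (clS ρ x)) ≤ ∑' j, |c j| := by
    have h2 : |F c (clS ρ x)| ≤ ∑' j, |c j| := abs_F_le hc (clS_abs_le hc hρ0 hρ1 hneg x)
    have := neg_abs_le (F c (clS ρ x))
    linarith [abs_nonneg (F c (clS ρ x)), le_abs_self (F c (clS ρ x)), neg_le_abs (F c (clS ρ x))]
  exact inv_anti₀ hpos hle

lemma TS_hasDerivAt (x : ℝ) : HasDerivAt (TS c ρ) (-(hS c ρ x)) x := by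
  have hcont := hS_cont hc hρ0 hρ1 hneg
  exact (intervalIntegral.integral_hasStrictDerivAt_left
    (hcont.intervalIntegrable _ _)
    (hcont.stronglyMeasurableAtFilter _ _)
    hcont.continuousAt).hasDerivAt

lemma TS_strictAnti : StrictAnti (TS c ρ) := by
  refine strictAnti_of_deriv_neg fun x => ?_
  rw [(TS_hasDerivAt hc hρ0 hρ1 hneg x).deriv]
  exact neg_neg_iff_pos.2 (hS_pos hc hρ0 hρ1 hneg x)


lemma TS_lb {x : ℝ} (hx : x ≤ 1) : (1 - x) * (∑' j, |c j|)⁻¹ ≤ TS c ρ x := by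
  have h := intervalIntegral.integral_mono_on (μ := MeasureTheory.volume) hx
    (intervalIntegrable_const (c := (∑' j, |c j|)⁻¹))
    ((hS_cont hc hρ0 hρ1 hneg).intervalIntegrable _ _)
    (fun s _ => hS_ge hc hρ0 hρ1 hneg s)
  rwa [intervalIntegral.integral_const, smul_eq_mul] at h

lemma TS_ub {x : ℝ} (hx : 1 ≤ x) : TS c ρ x ≤ -((x - 1) * (∑' j, |c j|)⁻¹) := by
  have h := intervalIntegral.integral_mono_on (μ := MeasureTheory.volume) hx
    (intervalIntegrable_const (c := (∑' j, |c j|)⁻¹))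
    ((hS_cont hc hρ0 hρ1 hneg).intervalIntegrable _ _)
    (fun s _ => hS_ge hc hρ0 hρ1 hneg s)
  rw [intervalIntegral.integral_const, smul_eq_mul] at h
  have hsymm : TS c ρ x = -∫ s in (1:ℝ)..x, hS c ρ s := by
    rw [TS, intervalIntegral.integral_symm]
  rw [hsymm]
  linarith

lemma TS_surj : Function.Surjective (TS c ρ) := by
  intro z
  have hM := M_pos hc hρ0 hρ1 hneg
  set M := ∑' j, |c j| with hMdef
  set xlo := 1 - M * (|z| + 1) with hxlo
  set xhi := 1 + M * (|z| + 1) with hxhi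
  have hMz : 0 < M * (|z| + 1) := mul_pos hM (by positivity)
  have hlo : z ≤ TS c ρ xlo := by
    have := TS_lb hc hρ0 hρ1 hneg (x := xlo) (by rw [hxlo]; linarith)
    have heq : (1 - xlo) * M⁻¹ = |z| + 1 := by
      rw [hxlo]; field_simp; ring
    rw [heq] at this
    linarith [le_abs_self z]
  have hhi : TS c ρ xhi ≤ z := by
    have := TS_ub hc hρ0 hρ1 hneg (x := xhi) (by rw [hxhi]; linarith)
    have heq : (xhi - 1) * M⁻¹ = |z| + 1 := by
      rw [hxhi]; field_simp; ring
    rw [heq] at this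
    linarith [neg_abs_le z]
  have hcont : ContinuousOn (TS c ρ) (Icc xlo xhi) :=
    (fun x _ => ((TS_hasDerivAt hc hρ0 hρ1 hneg x).differentiableAt.continuousAt).continuousWithinAt)
  have hle : xlo ≤ xhi := by rw [hxlo, hxhi]; linarith
  have := intermediate_value_Icc' hle hcont (a := xlo) (b := xhi) ⟨hhi, hlo⟩
  obtain ⟨x, _, hx⟩ := this
  exact ⟨x, hx⟩


lemma strip_exists :
    ∃ τ : ℝ, 0 < τ ∧ ∃ Y : ℝ → ℝ, Y 0 = 1 ∧ Y τ = 1 - ρ ∧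
      (∀ t ∈ Icc 0 τ, Y t ∈ Icc (1 - ρ) 1) ∧
      (∀ t ∈ Icc 0 τ, HasDerivAt Y (F c (Y t)) t) := by
  have hanti := TS_strictAnti hc hρ0 hρ1 hneg
  have hsurj := TS_surj hc hρ0 hρ1 hneg
  set Tm : ℝ → ℝ := fun x => TS c ρ (-x) with hTm
  have hTmono : StrictMono Tm := fun x y hxy => hanti (neg_lt_neg hxy)
  have hTmsurj : Function.Surjective Tm := by
    intro z
    obtain ⟨x, hx⟩ := hsurj z
    exact ⟨-x, by rw [hTm]; simpa using hx⟩
  set E := StrictMono.orderIsoOfSurjective Tm hTmono hTmsurj with hE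
  set Y : ℝ → ℝ := fun t => -(E.symm t) with hY
  have hYcont : Continuous Y := (E.symm.toHomeomorph.continuous).neg
  have hTY : ∀ t, TS c ρ (Y t) = t := by
    intro t
    have h : Tm (E.symm t) = t := by
      rw [← StrictMono.coe_orderIsoOfSurjective Tm hTmono hTmsurj]
      exact E.apply_symm_apply t
    show TS c ρ (-(E.symm t)) = t
    exact h
  have hYanti : StrictAnti Y := fun x y hxy => by
    have : E.symm x < E.symm y := by
      exact (OrderIso.lt_iff_lt E.symm).2 hxy
    simp only [hY]
    linarith
  have hY0 : Y 0 = 1 := by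
    have h0 : TS c ρ (Y 0) = TS c ρ 1 := by rw [hTY 0, TS_one]
    exact hanti.injective h0
  set τ := TS c ρ (1 - ρ) with hτ
  have hτpos : 0 < τ := by
    have := TS_lb hc hρ0 hρ1 hneg (x := 1 - ρ) (by linarith)
    have hM := M_pos hc hρ0 hρ1 hneg
    have : 0 < (1 - (1 - ρ)) * (∑' j, |c j|)⁻¹ := by
      have : 1 - (1 - ρ) = ρ := by ring
      rw [this]
      positivity
    linarith [TS_lb hc hρ0 hρ1 hneg (x := 1 - ρ) (by linarith : 1 - ρ ≤ 1)]
  have hYτ : Y τ = 1 - ρ := by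
    have h : TS c ρ (Y τ) = TS c ρ (1 - ρ) := by rw [hTY τ]
    exact hanti.injective h
  have hmem : ∀ t ∈ Icc 0 τ, Y t ∈ Icc (1 - ρ) 1 := by
    intro t ht
    constructor
    · rw [← hYτ]; exact hYanti.antitone ht.2
    · rw [← hY0]; exact hYanti.antitone ht.1
  refine ⟨τ, hτpos, Y, hY0, hYτ, hmem, fun t ht => ?_⟩
  have hder : HasDerivAt Y (-(hS c ρ (Y t)))⁻¹ t := by
    refine HasDerivAt.of_local_left_inverse (hYcont.continuousAt)
      (TS_hasDerivAt hc hρ0 hρ1 hneg (Y t)) ?_ ?_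
    · exact ne_of_lt (neg_neg_iff_pos.2 (hS_pos hc hρ0 hρ1 hneg (Y t)))
    · exact Eventually.of_forall hTY
  have hval : (-(hS c ρ (Y t)))⁻¹ = F c (Y t) := by
    rw [hS, clS_eq (hmem t ht), inv_neg, inv_inv, neg_neg]
  rwa [hval] at hder

lemma strip_unique {δ : ℝ} {y1 y2 : ℝ → ℝ}
    (h10 : y1 0 = 1) (h20 : y2 0 = 1)
    (hm1 : ∀ t ∈ Icc 0 δ, y1 t ∈ Icc (1 - ρ) 1)
    (hm2 : ∀ t ∈ Icc 0 δ, y2 t ∈ Icc (1 - ρ) 1)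
    (hc1 : ContinuousOn y1 (Icc 0 δ)) (hc2 : ContinuousOn y2 (Icc 0 δ))
    (hd1 : ∀ t ∈ Ico 0 δ, HasDerivWithinAt y1 (F c (y1 t)) (Ici t) t)
    (hd2 : ∀ t ∈ Ico 0 δ, HasDerivWithinAt y2 (F c (y2 t)) (Ici t) t) :
    ∀ t ∈ Icc 0 δ, y1 t = y2 t := by
  have key : ∀ y : ℝ → ℝ, y 0 = 1 → (∀ t ∈ Icc 0 δ, y t ∈ Icc (1 - ρ) 1) →
      ContinuousOn y (Icc 0 δ) →
      (∀ t ∈ Ico 0 δ, HasDerivWithinAt y (F c (y t)) (Ici t) t) →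
      ∀ t ∈ Icc 0 δ, TS c ρ (y t) = t := by
    intro y hy0 hym hycont hyd
    set φ : ℝ → ℝ := fun t => TS c ρ (y t) - t with hφ
    have hφcont : ContinuousOn φ (Icc 0 δ) := by
      refine ContinuousOn.sub ?_ continuousOn_id
      have hTS : Continuous (TS c ρ) := by
        have : Differentiable ℝ (TS c ρ) := fun x => (TS_hasDerivAt hc hρ0 hρ1 hneg x).differentiableAt
        exact this.continuous
      exact hTS.comp_continuousOn hycont
    have hφd : ∀ x ∈ Ico 0 δ, HasDerivWithinAt φ 0 (Ici x) x := by
      intro x hx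
      have hyx : y x ∈ Icc (1 - ρ) 1 := hym x ⟨hx.1, hx.2.le⟩
      have hFneg : F c (y x) < 0 := hneg _ hyx
      have hcomp : HasDerivWithinAt (fun t => TS c ρ (y t))
          (-(hS c ρ (y x)) * F c (y x)) (Ici x) x :=
        HasDerivAt.comp_hasDerivWithinAt x (TS_hasDerivAt hc hρ0 hρ1 hneg (y x)) (hyd x hx)
      have hval : -(hS c ρ (y x)) * F c (y x) = 1 := by
        rw [hS, clS_eq hyx]
        field_simp [ne_of_lt hFneg]
      rw [hval] at hcomp
      have := hcomp.sub (hasDerivWithinAt_id x (Ici x))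
      have h2 : HasDerivWithinAt (fun t => TS c ρ (y t) - t) (1 - 1) (Ici x) x := this
      simpa [hφ] using h2
    have hconst := constant_of_has_deriv_right_zero hφcont hφd
    intro t ht
    have := hconst t ht
    have hφ0 : φ 0 = 0 := by
      simp [hφ, hy0, TS_one]
    have hφt : φ t = 0 := by rw [this, hφ0]
    have : TS c ρ (y t) - t = 0 := hφt
    linarith
  intro t ht
  have h1 := key y1 h10 hm1 hc1 hd1 t ht
  have h2 := key y2 h20 hm2 hc2 hd2 t ht
  exact (TS_strictAnti hc hρ0 hρ1 hneg).injective (by rw [h1, h2])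


end StripFacts

lemma exists_rho (hc : Summable fun j => |c j|) (hF1 : F c 1 < 0) :
    ∃ ρ : ℝ, 0 < ρ ∧ ρ ≤ 1 ∧ ∀ x ∈ Icc (1 - ρ) 1, F c x < 0 := by
  have hcont : ContinuousWithinAt (F c) (Icc (-1 : ℝ) 1) 1 :=
    (continuousOn_F hc) 1 ⟨by norm_num, le_rfl⟩
  have h1 : (F c) ⁻¹' (Iio 0) ∈ 𝓝[Icc (-1 : ℝ) 1] 1 := hcont (Iio_mem_nhds hF1)
  rw [nhdsWithin_Icc_eq_nhdsLE (by norm_num : (-1 : ℝ) < 1)] at h1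
  obtain ⟨a', ha', hsub⟩ := mem_nhdsLE_iff_exists_Icc_subset.1 h1
  refine ⟨min (1 - a') 1, lt_min (by linarith) one_pos, min_le_right _ _, fun x hx => ?_⟩
  have hxa : a' ≤ x := by
    have := hx.1
    have hmin : min (1 - a') 1 ≤ 1 - a' := min_le_left _ _
    linarith
  exact hsub ⟨hxa, hx.2⟩


lemma exists_solution_from (hc : Summable fun j => |c j|) (hF1 : F c 1 < 0) (hF0 : 0 ≤ F c 0)
    {w : ℝ} (hw0 : 0 ≤ w) (hw1 : w < 1) :
    ∃ y : ℝ → ℝ, y 0 = w ∧ ∀ t, 0 ≤ t →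
      y t ∈ Icc (0:ℝ) 1 ∧ HasDerivWithinAt y (F c (y t)) (Ici 0) t := by
  obtain ⟨ρ, hρ0, hρ1, hneg⟩ := exists_rho hc hF1
  set A := Icc 0 w ∩ (F c) ⁻¹' (Ici 0) with hA
  have hwIcc : Icc (0:ℝ) w ⊆ Icc (-1:ℝ) 1 := fun x hx =>
    ⟨by linarith [hx.1], by linarith [hx.2]⟩
  have hAclosed : IsClosed A :=
    ((continuousOn_F hc).mono hwIcc).preimage_isClosed_of_isClosed isClosed_Icc isClosed_Ici
  have hAne : A.Nonempty := ⟨0, ⟨le_rfl, hw0⟩, hF0⟩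
  have hAbdd : BddAbove A := BddAbove.mono inter_subset_left bddAbove_Icc
  set a := sSup A with ha
  have haA : a ∈ A := hAclosed.csSup_mem hAne hAbdd
  set B := Icc w 1 ∩ (F c) ⁻¹' (Iic 0) with hB
  have hBclosed : IsClosed B :=
    ((continuousOn_F hc).mono fun x hx => ⟨by linarith [hx.1], hx.2⟩
      ).preimage_isClosed_of_isClosed isClosed_Icc isClosed_Iic
  have hmax_mem : max w (1 - ρ) ∈ B := by
    refine ⟨⟨le_max_left _ _, max_le hw1.le (by linarith)⟩, ?_⟩
    have hmem : max w (1 - ρ) ∈ Icc (1 - ρ) 1 :=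
      ⟨le_max_right _ _, max_le hw1.le (by linarith)⟩
    exact le_of_lt (hneg _ hmem)
  have hBne : B.Nonempty := ⟨_, hmax_mem⟩
  have hBbdd : BddBelow B := BddBelow.mono inter_subset_left bddBelow_Icc
  set b := sInf B with hb
  have hbB : b ∈ B := hBclosed.csInf_mem hBne hBbdd
  have hble : b ≤ max w (1 - ρ) := csInf_le hBbdd hmax_mem
  have hb1 : b < 1 := lt_of_le_of_lt hble (max_lt hw1 (by linarith))
  have hab : a ≤ b := le_trans haA.1.2 hbB.1.1
  obtain ⟨y, hy0, hy⟩ := exists_solution hc haA.1.1 hab hb1 haA.2 hbB.2 ⟨haA.1.2, hbB.1.1⟩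
  refine ⟨y, hy0, fun t ht => ⟨?_, (hy t ht).2⟩⟩
  have hmem := (hy t ht).1
  exact ⟨le_trans haA.1.1 hmem.1, le_trans hmem.2 hb1.le⟩

lemma main_exists (hc : Summable fun j => |c j|) (hF1 : F c 1 < 0) (hF0 : 0 ≤ F c 0)
    {u : ℝ} (hu : u ∈ Icc (0:ℝ) 1) :
    ∃ y : ℝ → ℝ, y 0 = u ∧ ∀ t, 0 ≤ t →
      y t ∈ Icc (0:ℝ) 1 ∧ HasDerivWithinAt y (F c (y t)) (Ici 0) t := by
  rcases lt_or_eq_of_le hu.2 with hu1 | hu1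
  · exact ⟨_, (exists_solution_from hc hF1 hF0 hu.1 hu1).choose_spec.1,
      (exists_solution_from hc hF1 hF0 hu.1 hu1).choose_spec.2⟩
  · obtain ⟨ρ, hρ0, hρ1, hneg⟩ := exists_rho hc hF1
    obtain ⟨τ, hτ, Y, hY0, hYτ, hYmem, hYder⟩ := strip_exists hc hρ0 hρ1 hneg
    obtain ⟨z, hz0, hz⟩ := exists_solution_from hc hF1 hF0 (w := 1 - ρ)
      (by linarith) (by linarith)
    set wf : ℝ → ℝ := fun s => z (s - τ) with hwf
    have hw_der : ∀ s, τ ≤ s → HasDerivWithinAt wf (F c (wf s)) (Ici τ) s := by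
      intro s hs
      have hz' := (hz (s - τ) (by linarith)).2
      have hinner : HasDerivWithinAt (fun x : ℝ => x - τ) 1 (Ici τ) s := by
        simpa using (hasDerivWithinAt_id s (Ici τ)).sub_const τ
      have hmaps : MapsTo (fun x : ℝ => x - τ) (Ici τ) (Ici 0) := fun x hx => by
        simp only [mem_Ici] at *; linarith
      have hcomp := HasDerivWithinAt.comp s hz' hinner hmaps
      have h2 : HasDerivWithinAt (fun s => z (s - τ)) (F c (z (s - τ)) * 1) (Ici τ) s := hcomp
      simpa [hwf] using h2
    have hw_mem : ∀ s, τ ≤ s → wf s ∈ Icc (0:ℝ) 1 := fun s hs =>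
      (hz (s - τ) (by linarith)).1
    set y : ℝ → ℝ := fun s => if s < τ then Y s else wf s with hy
    have hy_eq_Y : ∀ s ∈ Iic τ, y s = Y s := by
      intro s hs
      rcases lt_or_eq_of_le (mem_Iic.1 hs) with h | h
      · show (if s < τ then Y s else wf s) = Y s
        rw [if_pos h]
      · show (if s < τ then Y s else wf s) = Y s
        rw [if_neg (not_lt.2 h.ge)]
        show z (s - τ) = Y s
        rw [h, sub_self, hz0, hYτ]
    have hy_eq_w : ∀ s ∈ Ici τ, y s = wf s := by
      intro s hs
      show (if s < τ then Y s else wf s) = wf s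
      rw [if_neg (not_lt.2 (mem_Ici.1 hs))]
    refine ⟨y, ?_, ?_⟩
    · have : y 0 = Y 0 := hy_eq_Y 0 (mem_Iic.2 hτ.le)
      rw [this, hY0, hu1]
    · intro t ht
      rcases lt_trichotomy t τ with htτ | htτ | htτ
      · have hYd : HasDerivAt Y (F c (Y t)) t := hYder t ⟨ht, htτ.le⟩
        have heqev : y =ᶠ[𝓝 t] Y :=
          eventually_of_mem (Iio_mem_nhds htτ) fun s hs => hy_eq_Y s (mem_Iic.2 (le_of_lt (mem_Iio.1 hs)))
        have hyd : HasDerivAt y (F c (Y t)) t := hYd.congr_of_eventuallyEq heqev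
        have hytY : y t = Y t := hy_eq_Y t (mem_Iic.2 htτ.le)
        constructor
        · rw [hytY]
          have := hYmem t ⟨ht, htτ.le⟩
          exact ⟨by linarith [this.1], this.2⟩
        · rw [hytY]
          exact hyd.hasDerivWithinAt
      · subst htτ
        have hytw : y t = wf t := hy_eq_w t (mem_Ici.2 le_rfl)
        constructor
        · rw [hytw]; exact hw_mem t le_rfl
        · have hleft : HasDerivWithinAt y (F c (y t)) (Iic t) t := by
            have h1 : HasDerivWithinAt Y (F c (Y t)) (Iic t) t :=
              (hYder t ⟨hτ.le, le_rfl⟩).hasDerivWithinAt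
            have h2 := h1.congr (fun s hs => hy_eq_Y s hs) (hy_eq_Y t (mem_Iic.2 le_rfl))
            rw [hy_eq_Y t (mem_Iic.2 le_rfl)]
            exact h2
          have hright : HasDerivWithinAt y (F c (y t)) (Ici t) t := by
            have h1 := hw_der t le_rfl
            have h2 := h1.congr (fun s hs => hy_eq_w s hs) hytw
            rwa [hytw]
          exact (hleft.union hright).mono fun x _ => (le_total x t).imp id id
      · have hder := (hw_der t htτ.le).mono
          (fun x (hx : x ∈ Ici 0 ∩ Ioi τ) => mem_Ici.2 (le_of_lt hx.2))
        have hytw : y t = wf t := hy_eq_w t (mem_Ici.2 htτ.le)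
        constructor
        · rw [hytw]; exact hw_mem t htτ.le
        · have h2 := hder.congr (fun s (hs : s ∈ Ici 0 ∩ Ioi τ) => hy_eq_w s (mem_Ici.2 (le_of_lt hs.2))) hytw
          rw [hytw]
          exact (hasDerivWithinAt_inter (Ioi_mem_nhds htτ)).1 h2


lemma main_unique (hc : Summable fun j => |c j|) (hF1 : F c 1 < 0)
    {y1 y2 : ℝ → ℝ} {u : ℝ}
    (h10 : y1 0 = u) (h20 : y2 0 = u)
    (hm1 : ∀ t, 0 ≤ t → y1 t ∈ Icc (0:ℝ) 1) (hm2 : ∀ t, 0 ≤ t → y2 t ∈ Icc (0:ℝ) 1)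
    (hd1 : ∀ t, 0 ≤ t → HasDerivWithinAt y1 (F c (y1 t)) (Ici 0) t)
    (hd2 : ∀ t, 0 ≤ t → HasDerivWithinAt y2 (F c (y2 t)) (Ici 0) t) :
    ∀ t, 0 ≤ t → y1 t = y2 t := by
  have hcont1 : ContinuousOn y1 (Ici 0) := fun t ht => (hd1 t ht).continuousWithinAt
  have hcont2 : ContinuousOn y2 (Ici 0) := fun t ht => (hd2 t ht).continuousWithinAt
  have hlt1 : ∀ y : ℝ → ℝ, (∀ t, 0 ≤ t → y t ∈ Icc (0:ℝ) 1) →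
      (∀ t, 0 ≤ t → HasDerivWithinAt y (F c (y t)) (Ici 0) t) →
      ∀ t, 0 < t → y t < 1 := by
    intro y hm hd t ht
    rcases lt_or_eq_of_le (hm t ht.le).2 with h | h
    · exact h
    · exfalso
      have hda : HasDerivAt y (F c (y t)) t := (hd t ht.le).hasDerivAt (Ici_mem_nhds ht)
      have hmax : IsLocalMax y t := by
        filter_upwards [Ioi_mem_nhds ht] with s hs
        rw [h]
        exact (hm s (le_of_lt hs)).2
      have hzero := hmax.hasDerivAt_eq_zero hda
      rw [h] at hzero
      exact absurd hzero (ne_of_lt hF1)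
  intro tf htf
  rcases eq_or_lt_of_le htf with h0 | htfpos
  · rw [← h0, h10, h20]
  set E := Icc 0 tf ∩ (fun s => y1 s - y2 s) ⁻¹' {0} with hE
  have hEclosed : IsClosed E := by
    refine ContinuousOn.preimage_isClosed_of_isClosed ?_ isClosed_Icc isClosed_singleton
    exact (hcont1.mono (fun x hx => hx.1)).sub (hcont2.mono fun x hx => hx.1)
  have hE0 : 0 ∈ E := ⟨⟨le_rfl, htf⟩, by simp [h10, h20]⟩
  have hEbdd : BddAbove E := BddAbove.mono inter_subset_left bddAbove_Icc
  set σ := sSup E with hσ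
  have hσE : σ ∈ E := hEclosed.csSup_mem ⟨0, hE0⟩ hEbdd
  have hσ0 : 0 ≤ σ := hσE.1.1
  have hσtf : σ ≤ tf := hσE.1.2
  have hσeq : y1 σ = y2 σ := by
    have := hσE.2
    simp only [mem_preimage, mem_singleton_iff] at this
    linarith [this]
  rcases eq_or_lt_of_le hσtf with hfin | hσlt
  · rw [← hfin]; exact hσeq
  exfalso
  rcases lt_or_eq_of_le (hm1 σ hσ0).2 with hσ1 | hσ1
  · -- Lipschitz region
    set r := (1 + y1 σ) / 2 with hr
    have hy1σ0 : 0 ≤ y1 σ := (hm1 σ hσ0).1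
    have hr1 : r < 1 := by rw [hr]; linarith
    have hry : y1 σ < r := by rw [hr]; linarith
    have hr0 : 0 < r := by rw [hr]; linarith
    have hcw1 : ContinuousWithinAt y1 (Ici σ) σ :=
      ((hd1 σ hσ0).continuousWithinAt).mono fun x (hx : x ∈ Ici σ) => le_trans hσ0 hx
    have hcw2 : ContinuousWithinAt y2 (Ici σ) σ :=
      ((hd2 σ hσ0).continuousWithinAt).mono fun x (hx : x ∈ Ici σ) => le_trans hσ0 hx
    have hev1 : y1 ⁻¹' (Iio r) ∈ 𝓝[Ici σ] σ := hcw1 (Iio_mem_nhds hry)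
    have hev2 : y2 ⁻¹' (Iio r) ∈ 𝓝[Ici σ] σ := hcw2 (Iio_mem_nhds (by rwa [← hσeq]))
    obtain ⟨d, hdgt, hdsub⟩ :=
      mem_nhdsGE_iff_exists_Icc_subset.1 (inter_mem hev1 hev2)
    set d' := min d tf with hd'
    have hσd' : σ < d' := lt_min hdgt hσlt
    obtain ⟨K, hK⟩ := lipschitzOnWith_F hc hr0.le hr1
    have hIccsub : Icc σ d' ⊆ Icc σ d := Icc_subset_Icc_right (min_le_left _ _)
    have hvals1 : ∀ s ∈ Ico σ d', y1 s ∈ Icc (-r) r := by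
      intro s hs
      have hs0 : 0 ≤ s := le_trans hσ0 hs.1
      have := (hdsub (hIccsub ⟨hs.1, hs.2.le⟩)).1
      exact ⟨by linarith [(hm1 s hs0).1], le_of_lt this⟩
    have hvals2 : ∀ s ∈ Ico σ d', y2 s ∈ Icc (-r) r := by
      intro s hs
      have hs0 : 0 ≤ s := le_trans hσ0 hs.1
      have := (hdsub (hIccsub ⟨hs.1, hs.2.le⟩)).2
      exact ⟨by linarith [(hm2 s hs0).1], le_of_lt this⟩
    have heqon : EqOn y1 y2 (Icc σ d') := by
      refine ODE_solution_unique_of_mem_Icc_right (v := fun _ x => F c x)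
        (s := fun _ => Icc (-r) r) (fun _ _ => hK)
        (hcont1.mono fun x hx => le_trans hσ0 hx.1)
        (fun s hs => (hd1 s (le_trans hσ0 hs.1)).mono fun x (hx : x ∈ Ici s) =>
          le_trans (le_trans hσ0 hs.1) hx)
        hvals1
        (hcont2.mono fun x hx => le_trans hσ0 hx.1)
        (fun s hs => (hd2 s (le_trans hσ0 hs.1)).mono fun x (hx : x ∈ Ici s) =>
          le_trans (le_trans hσ0 hs.1) hx)
        hvals2 hσeq
    have hd'E : d' ∈ E := by
      refine ⟨⟨le_trans hσ0 hσd'.le, min_le_right _ _⟩, ?_⟩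
      simp only [mem_preimage, mem_singleton_iff]
      have := heqon ⟨hσd'.le, le_rfl⟩
      linarith [this]
    exact absurd (le_csSup hEbdd hd'E) (not_le.2 hσd')
  · -- y1 σ = 1, so σ = 0 and u = 1
    have hσzero : σ = 0 := by
      by_contra hne
      have hpos : 0 < σ := hσ0.lt_of_ne (Ne.symm hne)
      exact absurd hσ1 (ne_of_lt (hlt1 y1 hm1 hd1 σ hpos))
    have hu1 : u = 1 := by
      rw [hσzero] at hσ1
      rw [← h10, hσ1]
    obtain ⟨ρ, hρ0, hρ1, hneg⟩ := exists_rho hc hF1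
    have hcw1 : ContinuousWithinAt y1 (Ici 0) 0 := (hd1 0 le_rfl).continuousWithinAt
    have hcw2 : ContinuousWithinAt y2 (Ici 0) 0 := (hd2 0 le_rfl).continuousWithinAt
    have h1v : y1 0 > 1 - ρ := by rw [h10, hu1]; linarith
    have h2v : y2 0 > 1 - ρ := by rw [h20, hu1]; linarith
    have hev1 : y1 ⁻¹' (Ioi (1 - ρ)) ∈ 𝓝[Ici 0] 0 := hcw1 (Ioi_mem_nhds h1v)
    have hev2 : y2 ⁻¹' (Ioi (1 - ρ)) ∈ 𝓝[Ici 0] 0 := hcw2 (Ioi_mem_nhds h2v)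
    obtain ⟨d, hdgt, hdsub⟩ :=
      mem_nhdsGE_iff_exists_Icc_subset.1 (inter_mem hev1 hev2)
    set δ := min d tf with hδ
    have hδ0 : 0 < δ := lt_min hdgt htfpos
    have hIccsub : Icc (0:ℝ) δ ⊆ Icc 0 d := Icc_subset_Icc_right (min_le_left _ _)
    have heqon := strip_unique hc hρ0 hρ1 hneg (δ := δ)
      (by rw [h10, hu1]) (by rw [h20, hu1])
      (fun s hs => ⟨le_of_lt (hdsub (hIccsub hs)).1, (hm1 s hs.1).2⟩)
      (fun s hs => ⟨le_of_lt (hdsub (hIccsub hs)).2, (hm2 s hs.1).2⟩)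
      (hcont1.mono fun x hx => hx.1) (hcont2.mono fun x hx => hx.1)
      (fun s hs => (hd1 s hs.1).mono fun x (hx : x ∈ Ici s) => le_trans hs.1 hx)
      (fun s hs => (hd2 s hs.1).mono fun x (hx : x ∈ Ici s) => le_trans hs.1 hx)
    have hδE : δ ∈ E := by
      refine ⟨⟨hδ0.le, min_le_right _ _⟩, ?_⟩
      simp only [mem_preimage, mem_singleton_iff]
      have := heqon δ ⟨hδ0.le, le_rfl⟩
      linarith [this]
    have := le_csSup hEbdd hδE
    rw [← hσ] at this
    rw [hσzero] at this
    linarith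

end Stmt6

open Stmt6

/-- For every `v ∈ [0,1)^N` and every `u ∈ [0,1]`, there exists exactly one
differentiable function `y : [0,∞) → ℝ` with `0 ≤ y(t) ≤ 1` for all `t ≥ 0`, `y(0) = u`,
and `y'(t) = B_N(y(t), v) + B̄_N(y(t))` for all `t ≥ 0`. -/
theorem stmt_6
    (b : ℕ → ℝ)
    (hb_nonneg : ∀ j : ℕ, j ≠ 1 → 0 ≤ b j)
    (hb1 : b 1 < 0)
    (hb_sum : HasSum (fun j : ℕ => if j = 1 then 0 else b j) (-(b 1)))
    (N : Finset ℕ) (hN : N.Nonempty) (h1N : (1 : ℕ) ∉ N)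
    (hbN : ∀ k ∈ N, 0 < b k)
    (v : ℕ → ℝ) (hv : ∀ j ∈ N, v j ∈ Set.Ico (0 : ℝ) 1)
    (u : ℝ) (hu : u ∈ Set.Icc (0 : ℝ) 1) :
    (∃ y : ℝ → ℝ, y 0 = u ∧ ∀ t : ℝ, 0 ≤ t →
        y t ∈ Set.Icc (0 : ℝ) 1 ∧
        HasDerivWithinAt y
          ((∑ j ∈ N, b j * v j * (y t) ^ j)
            + (∑' j : ℕ, if j ∈ N then 0 else b j * (y t) ^ j))
          (Set.Ici (0 : ℝ)) t) ∧
    (∀ y₁ y₂ : ℝ → ℝ,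
      (y₁ 0 = u ∧ ∀ t : ℝ, 0 ≤ t →
        y₁ t ∈ Set.Icc (0 : ℝ) 1 ∧
        HasDerivWithinAt y₁
          ((∑ j ∈ N, b j * v j * (y₁ t) ^ j)
            + (∑' j : ℕ, if j ∈ N then 0 else b j * (y₁ t) ^ j))
          (Set.Ici (0 : ℝ)) t) →
      (y₂ 0 = u ∧ ∀ t : ℝ, 0 ≤ t →
        y₂ t ∈ Set.Icc (0 : ℝ) 1 ∧
        HasDerivWithinAt y₂
          ((∑ j ∈ N, b j * v j * (y₂ t) ^ j)
            + (∑' j : ℕ, if j ∈ N then 0 else b j * (y₂ t) ^ j))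
          (Set.Ici (0 : ℝ)) t) →
      ∀ t : ℝ, 0 ≤ t → y₁ t = y₂ t) := by
  classical
  set c : ℕ → ℝ := fun j => if j ∈ N then b j * v j else b j with hcdef
  -- summability of |b|
  have hb_abs : Summable fun j => |b j| := by
    have h1 : Summable fun j => if j = 1 then 0 else b j := hb_sum.summable
    have h2 : Summable fun j : ℕ => if j = 1 then |b 1| else 0 :=
      (hasSum_ite_eq 1 |b 1|).summable
    have heq : (fun j => |b j|) =
        fun j => (if j = 1 then 0 else b j) + (if j = 1 then |b 1| else 0) := by
      funext j
      by_cases hj : j = 1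
      · subst hj; simp
      · simp [hj, abs_of_nonneg (hb_nonneg j hj)]
    rw [heq]
    exact h1.add h2
  have hvle : ∀ j ∈ N, 0 ≤ v j ∧ v j < 1 := fun j hj => ⟨(hv j hj).1, (hv j hj).2⟩
  have hcabs : Summable fun j => |c j| := by
    refine Summable.of_nonneg_of_le (fun j => abs_nonneg _) (fun j => ?_) hb_abs
    by_cases hj : j ∈ N
    · have hb0 : 0 ≤ b j := (hbN j hj).le
      have hv0 := (hvle j hj).1
      have hv1 := (hvle j hj).2
      show |if j ∈ N then b j * v j else b j| ≤ |b j|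
      rw [if_pos hj, abs_mul, abs_of_nonneg hv0]
      calc |b j| * v j ≤ |b j| * 1 := by
            exact mul_le_mul_of_nonneg_left hv1.le (abs_nonneg _)
        _ = |b j| := mul_one _
    · show |if j ∈ N then b j * v j else b j| ≤ |b j|
      rw [if_neg hj]
  -- HasSum b 0
  have hsum0 : HasSum b 0 := by
    have h2 : HasSum (fun j : ℕ => if j = 1 then b 1 else 0) (b 1) := hasSum_ite_eq 1 (b 1)
    have h3 := hb_sum.add h2
    rw [neg_add_cancel] at h3
    have heq : (fun j => (if j = 1 then 0 else b j) + (if j = 1 then b 1 else 0)) = b := by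
      funext j
      by_cases hj : j = 1
      · subst hj; simp
      · simp [hj]
    rwa [heq] at h3
  -- F c 1 < 0
  have hF1 : F c 1 < 0 := by
    have hd : HasSum (fun j : ℕ => if j ∈ N then b j * (v j - 1) else 0)
        (∑ j ∈ N, if j ∈ N then b j * (v j - 1) else 0) :=
      hasSum_sum_of_ne_finset_zero fun j hj => if_neg hj
    have hcsum : HasSum c (0 + ∑ j ∈ N, if j ∈ N then b j * (v j - 1) else 0) := by
      have h3 := hsum0.add hd
      have heq : (fun j => b j + (if j ∈ N then b j * (v j - 1) else 0)) = c := by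
        funext j
        by_cases hj : j ∈ N
        · simp only [hcdef, if_pos hj]; ring
        · simp only [hcdef, if_neg hj]; ring
      rwa [heq] at h3
    have hFeq : F c 1 = ∑' j, c j := by
      unfold F
      refine tsum_congr fun j => by rw [one_pow, mul_one]
    rw [hFeq, hcsum.tsum_eq, zero_add]
    have : ∑ j ∈ N, (if j ∈ N then b j * (v j - 1) else 0) =
        ∑ j ∈ N, b j * (v j - 1) :=
      Finset.sum_congr rfl fun j hj => if_pos hj
    rw [this]
    calc ∑ j ∈ N, b j * (v j - 1) < ∑ j ∈ N, (0:ℝ) := by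
          refine Finset.sum_lt_sum_of_nonempty hN fun j hj => ?_
          exact mul_neg_of_pos_of_neg (hbN j hj) (by linarith [(hvle j hj).2])
      _ = 0 := Finset.sum_const_zero
  -- 0 ≤ F c 0
  have hF0 : 0 ≤ F c 0 := by
    have hFeq : F c 0 = c 0 := by
      unfold F
      rw [tsum_eq_single 0 (fun j hj => by rw [zero_pow hj, mul_zero])]
      norm_num
    rw [hFeq]
    by_cases h0 : 0 ∈ N
    · show 0 ≤ if 0 ∈ N then b 0 * v 0 else b 0
      rw [if_pos h0]
      exact mul_nonneg (hbN 0 h0).le (hvle 0 h0).1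
    · show 0 ≤ if 0 ∈ N then b 0 * v 0 else b 0
      rw [if_neg h0]
      exact hb_nonneg 0 (by omega)
  -- expression equals F c
  have hexpr : ∀ x : ℝ, |x| ≤ 1 →
      (∑ j ∈ N, b j * v j * x ^ j) + (∑' j : ℕ, if j ∈ N then 0 else b j * x ^ j) = F c x := by
    intro x hx
    have hs2 : Summable fun j : ℕ => if j ∈ N then 0 else b j * x ^ j := by
      refine Summable.of_norm_bounded hb_abs fun j => ?_
      by_cases hj : j ∈ N
      · simp [hj]
      · simp only [if_neg hj]
        exact term_bound hx j
    have hs1 : HasSum (fun j : ℕ => if j ∈ N then b j * v j * x ^ j else 0)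
        (∑ j ∈ N, if j ∈ N then b j * v j * x ^ j else 0) :=
      hasSum_sum_of_ne_finset_zero fun j hj => if_neg hj
    have hFeq : F c x = ∑' j, ((if j ∈ N then b j * v j * x ^ j else 0)
        + (if j ∈ N then 0 else b j * x ^ j)) := by
      unfold F
      refine tsum_congr fun j => ?_
      by_cases hj : j ∈ N
      · simp [hcdef, hj]
      · simp [hcdef, hj]
    rw [hFeq, Summable.tsum_add hs1.summable hs2, hs1.tsum_eq]
    congr 1
    exact Finset.sum_congr rfl fun j hj => (if_pos hj).symm
  have habs1 : ∀ x : ℝ, x ∈ Set.Icc (0:ℝ) 1 → |x| ≤ 1 := fun x hx =>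
    abs_le.2 ⟨by linarith [hx.1], hx.2⟩
  constructor
  · obtain ⟨y, hy0, hy⟩ := main_exists hcabs hF1 hF0 hu
    refine ⟨y, hy0, fun t ht => ⟨(hy t ht).1, ?_⟩⟩
    rw [hexpr (y t) (habs1 _ (hy t ht).1)]
    exact (hy t ht).2
  · intro y₁ y₂ h1 h2 t ht
    refine main_unique hcabs hF1 h1.1 h2.1
      (fun s hs => (h1.2 s hs).1) (fun s hs => (h2.2 s hs).1)
      (fun s hs => ?_) (fun s hs => ?_) t ht
    · have := (h1.2 s hs).2
      rwa [hexpr (y₁ s) (habs1 _ (h1.2 s hs).1)] at this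
    · have := (h2.2 s hs).2
      rwa [hexpr (y₂ s) (habs1 _ (h2.2 s hs).1)] at this
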